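/- Let a ≤ x₀ ≤ b be real numbers, let f : [a,b] → ℝ be convex with f ≥ 0 on [a,b] and f(a) = 0, and let g : ℝ → ℝ be an affine function with g(b) = 0 and g(x₀) = f(x₀). Then for every Borel probability measure ν on ℝ supported on [a,b], ∫(f − g)² dν ≥ ν({a}) · ∫ f² dν. -/

import Mathlib

open MeasureTheory Set

set_option maxHeartbeats 1000000 in
/-- Step 3 of the proof of the local-to-global lemma. -/
theorem step3_linear_case
    (a x₀ b : ℝ) (hax : a ≤ x₀) (hxb : x₀ ≤ b)
    (f : ℝ → ℝ) (hf : ConvexOn ℝ (Icc a b) f)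
    (hf0 : ∀ t ∈ Icc a b, 0 ≤ f t) (hfa : f a = 0)
    (g : ℝ → ℝ) (hg : ∃ p q : ℝ, ∀ y, g y = p * y + q)
    (hgb : g b = 0) (hgx : g x₀ = f x₀)
    (ν : Measure ℝ) [IsProbabilityMeasure ν]
    (hν : ν (Icc a b)ᶜ = 0) :
    (ν {a}).toReal * ∫ t, (f t) ^ 2 ∂ν ≤ ∫ t, (f t - g t) ^ 2 ∂ν := by
  obtain ⟨p, q, hpq⟩ := hg
  have hab : a ≤ b := hax.trans hxb
  have hae : ∀ᵐ t ∂ν, t ∈ Icc a b := by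
    rw [ae_iff]
    simpa [Set.compl_def] using hν
  -- f is monotone on [a,b]
  have hmono : ∀ s t, s ∈ Icc a b → t ∈ Icc a b → s ≤ t → f s ≤ f t := by
    intro s t hs ht hst
    rcases eq_or_lt_of_le hs.1 with h | h
    · rw [← h, hfa]; exact hf0 t ht
    · have hta : a < t := lt_of_lt_of_le h hst
      have hta' : (0:ℝ) < t - a := by linarith
      set l : ℝ := (t - s) / (t - a) with hl
      set m : ℝ := (s - a) / (t - a) with hm
      have hl0 : 0 ≤ l := by
        apply div_nonneg <;> linarith
      have hm0 : 0 ≤ m := by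
        apply div_nonneg <;> linarith
      have hlm : l + m = 1 := by
        rw [hl, hm]
        field_simp
        ring
      have hconv := hf.2 (left_mem_Icc.mpr hab) ht hl0 hm0 hlm
      have hs' : l • a + m • t = s := by
        simp only [smul_eq_mul, hl, hm]
        field_simp
        ring
      rw [hs'] at hconv
      have hft : 0 ≤ f t := hf0 t ht
      have hm1 : m ≤ 1 := by
        rw [div_le_one hta']; linarith
      simp only [smul_eq_mul, hfa] at hconv
      nlinarith
  -- f is a.e. strongly measurable
  have hfm : AEStronglyMeasurable f ν := by
    refine ⟨fun y => f (max a (min y b)), ?_, ?_⟩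
    · refine (Monotone.measurable ?_).stronglyMeasurable
      intro u v huv
      refine hmono _ _ ⟨le_max_left _ _, max_le hab (min_le_right _ _)⟩
        ⟨le_max_left _ _, max_le hab (min_le_right _ _)⟩ ?_
      gcongr
    · filter_upwards [hae] with t ht
      rw [min_eq_left ht.2, max_eq_right ht.1]
  have hgm : AEStronglyMeasurable g ν := by
    have : Continuous g := by
      have : g = fun y => p * y + q := funext hpq
      rw [this]; fun_prop
    exact this.aestronglyMeasurable
  have hhm : AEStronglyMeasurable (fun t => (f t - g t) ^ 2) ν :=
    (hfm.sub hgm).pow 2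
  have hf2m : AEStronglyMeasurable (fun t => (f t) ^ 2) ν := hfm.pow 2
  -- g² is integrable
  set K : ℝ := (|p| * (|a| + |b|) + |q|) ^ 2 with hK
  have hgbd : ∀ᵐ t ∂ν, ‖(g t) ^ 2‖ ≤ K := by
    filter_upwards [hae] with t ht
    have h1 : |t| ≤ |a| + |b| :=
      (abs_le_max_abs_abs ht.1 ht.2).trans
        (max_le (le_add_of_nonneg_right (abs_nonneg b)) (le_add_of_nonneg_left (abs_nonneg a)))
    have h2 : |g t| ≤ |p| * (|a| + |b|) + |q| := by
      rw [hpq t]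
      calc |p * t + q| ≤ |p * t| + |q| := abs_add_le _ _
        _ = |p| * |t| + |q| := by rw [abs_mul]
        _ ≤ |p| * (|a| + |b|) + |q| := by
            have := abs_nonneg p
            nlinarith
    rw [Real.norm_eq_abs, abs_of_nonneg (sq_nonneg _), hK]
    nlinarith [h2, abs_nonneg (g t), sq_abs (g t)]
  have hg2 : Integrable (fun t => (g t) ^ 2) ν :=
    Integrable.mono' (integrable_const K) (hgm.pow 2) hgbd
  -- if f² isn't integrable, both sides are junk
  by_cases hfi : Integrable (fun t => (f t) ^ 2) ν
  case neg =>
    have hhi : ¬ Integrable (fun t => (f t - g t) ^ 2) ν := by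
      intro h
      apply hfi
      refine Integrable.mono' (((h.const_mul 2).add (hg2.const_mul 2))) hf2m ?_
      filter_upwards with t
      simp only [Pi.add_apply]
      rw [Real.norm_eq_abs, abs_of_nonneg (sq_nonneg _)]
      nlinarith [sq_nonneg (f t - 2 * g t)]
    rw [integral_undef hfi, integral_undef hhi]
    simp
  case pos =>
  have hhi : Integrable (fun t => (f t - g t) ^ 2) ν := by
    refine Integrable.mono' (((hfi.const_mul 2).add (hg2.const_mul 2))) hhm ?_
    filter_upwards with t
    simp only [Pi.add_apply]
    rw [Real.norm_eq_abs, abs_of_nonneg (sq_nonneg _)]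
    nlinarith [sq_nonneg (f t + g t)]
  set c : ℝ := (ν {a}).toReal with hc
  clear_value c
  have hc0 : 0 ≤ c := hc ▸ ENNReal.toReal_nonneg
  have hc1 : c ≤ 1 := by
    rw [hc]
    have := prob_le_one (μ := ν) (s := {a})
    calc (ν {a}).toReal ≤ ENNReal.toReal 1 := ENNReal.toReal_mono (by simp) this
      _ = 1 := by simp
  -- case c = 1 : measure concentrated at a
  by_cases hce : c = 1
  · have hνa : ν {a}ᶜ = 0 := by
      have h1 : ν {a} = 1 := by
        have hne : ν {a} ≠ ⊤ := measure_ne_top ν _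
        have := prob_le_one (μ := ν) (s := {a})
        rcases lt_or_eq_of_le this with h | h
        · exfalso
          have : (ν {a}).toReal < 1 := by
            rw [show (1:ℝ) = ENNReal.toReal (1 : ENNReal) by simp]
            exact ENNReal.toReal_strict_mono (by simp) h
          rw [← hc] at this; linarith
        · exact h
      rw [measure_compl (measurableSet_singleton a) (measure_ne_top ν _), h1]
      simp [measure_univ]
    have haea : ∀ᵐ t ∂ν, t = a := by
      rw [ae_iff]
      simpa [Set.compl_def] using hνa
    have hint0 : ∫ t, (f t) ^ 2 ∂ν = 0 := by
      apply integral_eq_zero_of_ae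
      filter_upwards [haea] with t ht
      simp [ht, hfa]
    rw [hint0, mul_zero]
    exact integral_nonneg fun t => sq_nonneg _
  · have hc1' : c < 1 := lt_of_le_of_ne hc1 hce
    -- case x₀ = b: f vanishes on [a,b]
    by_cases hxb' : x₀ = b
    · have hfb : f b = 0 := by rw [← hxb', ← hgx, hxb', hgb]
      have hfz : ∀ t ∈ Icc a b, f t = 0 := by
        intro t ht
        exact le_antisymm (by
          have := hmono t b ht (right_mem_Icc.mpr hab) ht.2
          linarith) (hf0 t ht)
      have hint0 : ∫ t, (f t) ^ 2 ∂ν = 0 := by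
        apply integral_eq_zero_of_ae
        filter_upwards [hae] with t ht
        simp [hfz t ht]
      rw [hint0, mul_zero]
      exact integral_nonneg fun t => sq_nonneg _
    · have hx0b : x₀ < b := lt_of_le_of_ne hxb hxb'
      -- slope of g is nonpositive
      have hp : p ≤ 0 := by
        have h1 : p * x₀ + q = f x₀ := by rw [← hpq x₀, hgx]
        have h2 : p * b + q = 0 := by rw [← hpq b, hgb]
        have h3 : 0 ≤ f x₀ := hf0 x₀ ⟨hax, hxb⟩
        nlinarith
      have hgnn : ∀ t ∈ Icc a b, 0 ≤ g t := by
        intro t ht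
        rw [hpq t]
        have h2 : p * b + q = 0 := by rw [← hpq b, hgb]
        nlinarith [ht.2]
      have hgle : ∀ t ∈ Icc a b, g t ≤ g a := by
        intro t ht
        rw [hpq t, hpq a]
        nlinarith [ht.1]
      set A : ℝ := g a with hA
      clear_value A
      -- key pointwise a.e. inequality
      have key : ∀ᵐ t ∂ν, 0 ≤ (1 - c) * (f t - g t) ^ 2 - c * (1 - c) * (f t) ^ 2
          - A ^ 2 * (({a} : Set ℝ).indicator (fun _ => (1:ℝ)) t - c) := by
        filter_upwards [hae] with t ht
        by_cases hta : t = a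
        · subst hta
          rw [Set.indicator_of_mem (Set.mem_singleton t) (fun _ => (1:ℝ)), hfa, hA]
          nlinarith [sq_nonneg (g t)]
        · rw [Set.indicator_of_notMem (by simpa using hta)]
          have h1 : 0 ≤ g t := hgnn t ht
          have h2 : g t ≤ A := hgle t ht
          nlinarith [sq_nonneg ((1 - c) * (f t - g t) - c * g t),
            mul_nonneg hc0 (mul_nonneg (sub_nonneg.mpr h2) (by linarith : (0:ℝ) ≤ A + g t))]
      have hi1 : Integrable (({a} : Set ℝ).indicator (fun _ => (1:ℝ))) ν :=
        (integrable_const (1:ℝ)).indicator (measurableSet_singleton a)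
      have hii : Integrable (fun t => (({a} : Set ℝ).indicator (fun _ => (1:ℝ)) t - c)) ν :=
        hi1.sub (integrable_const c)
      have h1i : Integrable (fun t => (1 - c) * (f t - g t) ^ 2) ν := hhi.const_mul _
      have h2i : Integrable (fun t => c * (1 - c) * (f t) ^ 2) ν := hfi.const_mul _
      have h3i : Integrable (fun t => A ^ 2 * (({a} : Set ℝ).indicator (fun _ => (1:ℝ)) t - c)) ν :=
        hii.const_mul _
      have h12i : Integrable (fun t => (1 - c) * (f t - g t) ^ 2 - c * (1 - c) * (f t) ^ 2) ν :=
        h1i.sub h2i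
      have hnn := integral_nonneg_of_ae key
      simp only [integral_sub h12i h3i, integral_sub h1i h2i, integral_const_mul,
        integral_sub hi1 (integrable_const c),
        integral_indicator_const (1:ℝ) (measurableSet_singleton a), integral_const,
        measureReal_def, measure_univ, ENNReal.toReal_one, smul_eq_mul, one_mul, mul_one, ← hc] at hnn
      have hc1'' : (0:ℝ) < 1 - c := by linarith
      nlinarith [hnn]
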